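/- If x₁, x₂ are independent random variables uniformly distributed on (0,1), then y₁ = √(−2 log x₁) cos(2π x₂) and y₂ = √(−2 log x₁) sin(2π x₂) are independent standard Gaussian random variables (Box–Muller transform). -/

import Mathlib

open MeasureTheory ProbabilityTheory Real

namespace BoxMullerAux

open Set

noncomputable def bmF (p : ℝ × ℝ) : ℝ × ℝ :=
  (Real.sqrt (-2 * Real.log p.1) * Real.cos (2 * π * p.2),
   Real.sqrt (-2 * Real.log p.1) * Real.sin (2 * π * p.2))

noncomputable def bmR' (x : ℝ) : ℝ := 1 / (2 * Real.sqrt (-2 * Real.log x)) * (-2 * x⁻¹)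

noncomputable def bmB (p : ℝ × ℝ) : ℝ × ℝ →L[ℝ] ℝ × ℝ :=
  LinearMap.toContinuousLinearMap (Matrix.toLin (Module.Basis.finTwoProd ℝ) (Module.Basis.finTwoProd ℝ)
    !![bmR' p.1 * Real.cos (2 * π * p.2),
       Real.sqrt (-2 * Real.log p.1) * (-Real.sin (2 * π * p.2) * (2 * π * 1));
       bmR' p.1 * Real.sin (2 * π * p.2),
       Real.sqrt (-2 * Real.log p.1) * (Real.cos (2 * π * p.2) * (2 * π * 1))])

def bmS : Set (ℝ × ℝ) := Set.Ioo (0:ℝ) 1 ×ˢ Set.Ioo (0:ℝ) 1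

theorem measurable_bmF : Measurable bmF := by
  apply Measurable.prod
  · exact ((Real.continuous_sqrt.measurable.comp ((measurable_log.comp measurable_fst).const_mul (-2))).mul
      (Real.measurable_cos.comp (measurable_snd.const_mul (2 * π))))
  · exact ((Real.continuous_sqrt.measurable.comp ((measurable_log.comp measurable_fst).const_mul (-2))).mul
      (Real.measurable_sin.comp (measurable_snd.const_mul (2 * π))))

theorem hasFDerivAt_bmF {p : ℝ × ℝ} (hp : p ∈ bmS) : HasFDerivAt bmF (bmB p) p := by
  obtain ⟨⟨h0, h1⟩, -⟩ := hp
  have hlog : Real.log p.1 < 0 := Real.log_neg h0 h1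
  have hu : -2 * Real.log p.1 ≠ 0 := by nlinarith
  have hr : HasDerivAt (fun x => Real.sqrt (-2 * Real.log x)) (bmR' p.1) p.1 := by
    have h := (Real.hasDerivAt_sqrt hu).comp p.1
      ((Real.hasDerivAt_log h0.ne').const_mul (-2))
    simpa [bmR', Function.comp_def] using h
  have hc : HasDerivAt (fun y => Real.cos (2 * π * y))
      (-Real.sin (2 * π * p.2) * (2 * π * 1)) p.2 := by
    have h := (Real.hasDerivAt_cos (2 * π * p.2)).comp p.2
      ((hasDerivAt_id p.2).const_mul (2 * π))
    simpa [Function.comp_def] using h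
  have hsin : HasDerivAt (fun y => Real.sin (2 * π * y))
      (Real.cos (2 * π * p.2) * (2 * π * 1)) p.2 := by
    have h := (Real.hasDerivAt_sin (2 * π * p.2)).comp p.2
      ((hasDerivAt_id p.2).const_mul (2 * π))
    simpa [Function.comp_def] using h
  rw [bmB, Matrix.toLin_finTwoProd_toContinuousLinearMap]
  unfold bmF
  convert HasFDerivAt.prodMk
    ((hr.comp_hasFDerivAt p hasFDerivAt_fst).mul (hc.comp_hasFDerivAt p hasFDerivAt_snd))
    ((hr.comp_hasFDerivAt p hasFDerivAt_fst).mul (hsin.comp_hasFDerivAt p (hasFDerivAt_snd (𝕜 := ℝ) (p := p))))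
      using 2 <;>
  first
  | rfl
  | simp [smul_smul, add_comm, neg_mul, smul_neg, neg_smul _ (ContinuousLinearMap.snd ℝ ℝ ℝ),
    mul_comm]

theorem det_bmB {p : ℝ × ℝ} (hp : p ∈ bmS) :
    (bmB p).det = -(2 * π) * p.1⁻¹ := by
  obtain ⟨⟨h0, h1⟩, -⟩ := hp
  have hlog : Real.log p.1 < 0 := Real.log_neg h0 h1
  have hu : (0:ℝ) < -2 * Real.log p.1 := by nlinarith
  have hrpos : 0 < Real.sqrt (-2 * Real.log p.1) := Real.sqrt_pos.mpr hu
  have hpyth := Real.sin_sq_add_cos_sq (2 * π * p.2)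
  simp only [bmB, bmR', LinearMap.det_toContinuousLinearMap, LinearMap.det_toLin,
    Matrix.det_fin_two_of]
  set r := Real.sqrt (-2 * Real.log p.1) with hrdef
  have hr : r ≠ 0 := hrpos.ne'
  have key : (1:ℝ) / (2 * r) * r = 1 / 2 := by field_simp
  linear_combination ((-2 * p.1⁻¹) * (2 * π * 1) *
      (Real.sin (2 * π * p.2) ^ 2 + Real.cos (2 * π * p.2) ^ 2)) * key +
    ((-2 * p.1⁻¹) * (2 * π * 1) / 2) * hpyth

theorem angle_eq {a b : ℝ} (ha : a ∈ Set.Ioo 0 (2 * π)) (hb : b ∈ Set.Ioo 0 (2 * π))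
    (hcos : Real.cos a = Real.cos b) (hsin : Real.sin a = Real.sin b) : a = b := by
  have hexp : Complex.exp (a * Complex.I) = Complex.exp (b * Complex.I) := by
    rw [Complex.exp_mul_I, Complex.exp_mul_I, ← Complex.ofReal_cos, ← Complex.ofReal_cos,
      ← Complex.ofReal_sin, ← Complex.ofReal_sin, hcos, hsin]
  obtain ⟨n, hn⟩ := Complex.exp_eq_exp_iff_exists_int.mp hexp
  have him := congrArg Complex.im hn
  simp [Complex.add_im, Complex.mul_im, Complex.mul_re] at him
  -- him : a = b + n * (2 * π)  (in some shape)
  have hpi := Real.pi_pos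
  have hnr : a = b + (n : ℝ) * (2 * π) := by
    push_cast at him ⊢
    linarith [him]
  have h1 : ((n : ℝ)) < 1 := by nlinarith [ha.1, ha.2, hb.1, hb.2]
  have h2 : (-1 : ℝ) < (n : ℝ) := by nlinarith [ha.1, ha.2, hb.1, hb.2]
  have h1' : n < 1 := by exact_mod_cast h1
  have h2' : (-1 : ℤ) < n := by exact_mod_cast h2
  have hn0 : n = 0 := by omega
  rw [hn0] at hnr
  push_cast at hnr
  linarith

theorem injOn_bmF : Set.InjOn bmF bmS := by
  rintro p ⟨⟨hp0, hp1⟩, hp2, hp3⟩ q ⟨⟨hq0, hq1⟩, hq2, hq3⟩ h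
  have hpi := Real.pi_pos
  set rp := Real.sqrt (-2 * Real.log p.1) with hrp_def
  set rq := Real.sqrt (-2 * Real.log q.1) with hrq_def
  have hup : (0:ℝ) < -2 * Real.log p.1 := by nlinarith [Real.log_neg hp0 hp1]
  have huq : (0:ℝ) < -2 * Real.log q.1 := by nlinarith [Real.log_neg hq0 hq1]
  have hrp : 0 < rp := Real.sqrt_pos.mpr hup
  have hrq : 0 < rq := Real.sqrt_pos.mpr huq
  have h1 : rp * Real.cos (2 * π * p.2) = rq * Real.cos (2 * π * q.2) :=
    congrArg Prod.fst h
  have h2 : rp * Real.sin (2 * π * p.2) = rq * Real.sin (2 * π * q.2) :=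
    congrArg Prod.snd h
  have e1 := Real.sin_sq_add_cos_sq (2 * π * p.2)
  have e2 := Real.sin_sq_add_cos_sq (2 * π * q.2)
  have hsq : rp ^ 2 = rq ^ 2 := by
    linear_combination (rp * Real.cos (2 * π * p.2) + rq * Real.cos (2 * π * q.2)) * h1 +
      (rp * Real.sin (2 * π * p.2) + rq * Real.sin (2 * π * q.2)) * h2 - rp ^ 2 * e1 +
      rq ^ 2 * e2
  have hr : rp = rq := by
    have hfac : (rp - rq) * (rp + rq) = 0 := by linear_combination hsq
    rcases mul_eq_zero.mp hfac with h' | h'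
    · linarith
    · linarith
  have hx1 : p.1 = q.1 := by
    have hlog : -2 * Real.log p.1 = -2 * Real.log q.1 :=
      (Real.sqrt_inj hup.le huq.le).mp hr
    have : Real.log p.1 = Real.log q.1 := by linarith
    have := congrArg Real.exp this
    rwa [Real.exp_log hp0, Real.exp_log hq0] at this
  have hcos : Real.cos (2 * π * p.2) = Real.cos (2 * π * q.2) := by
    rw [hr] at h1
    exact mul_left_cancel₀ hrq.ne' h1
  have hsin : Real.sin (2 * π * p.2) = Real.sin (2 * π * q.2) := by
    rw [hr] at h2
    exact mul_left_cancel₀ hrq.ne' h2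
  have hang : 2 * π * p.2 = 2 * π * q.2 := by
    refine angle_eq ⟨by nlinarith, by nlinarith⟩ ⟨by nlinarith, by nlinarith⟩ hcos hsin
  have hx2 : p.2 = q.2 := by
    have h2pi : (2 * π) ≠ 0 := by positivity
    exact mul_left_cancel₀ h2pi hang
  exact Prod.ext hx1 hx2

theorem mem_image_bmF {q : ℝ × ℝ} (hq : q.2 ≠ 0) : q ∈ bmF '' bmS := by
  have hpi := Real.pi_pos
  set z : ℂ := ⟨q.1, q.2⟩ with hz_def
  have hz : z ≠ 0 := by
    intro h
    exact hq (by simpa [hz_def] using congrArg Complex.im h)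
  have hR : 0 < ‖z‖ := norm_pos_iff.mpr hz
  set R := ‖z‖ with hR_def
  set θ₀ := Complex.arg z with hθ₀_def
  have hcos0 : Real.cos θ₀ = q.1 / R := by rw [hθ₀_def, Complex.cos_arg hz]
  have hsin0 : Real.sin θ₀ = q.2 / R := by rw [hθ₀_def, Complex.sin_arg]
  have hθ0ne : θ₀ ≠ 0 := by
    intro h
    exact hq (Complex.arg_eq_zero_iff.mp h).2
  have hl : -π < θ₀ := Complex.neg_pi_lt_arg z
  have hu : θ₀ ≤ π := Complex.arg_le_pi z
  set θ := if 0 < θ₀ then θ₀ else θ₀ + 2 * π with hθ_def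
  have hθmem : θ ∈ Set.Ioo 0 (2 * π) := by
    rw [hθ_def]; split_ifs with h
    · exact ⟨h, by linarith⟩
    · have : θ₀ < 0 := lt_of_le_of_ne (not_lt.mp h) hθ0ne
      exact ⟨by linarith, by linarith⟩
  have hcosθ : Real.cos θ = Real.cos θ₀ := by
    rw [hθ_def]; split_ifs with h
    · rfl
    · exact Real.cos_add_two_pi θ₀
  have hsinθ : Real.sin θ = Real.sin θ₀ := by
    rw [hθ_def]; split_ifs with h
    · rfl
    · exact Real.sin_add_two_pi θ₀
  refine ⟨(Real.exp (-(R ^ 2) / 2), θ / (2 * π)), ⟨⟨Real.exp_pos _, ?_⟩, ?_, ?_⟩, ?_⟩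
  · rw [show (1:ℝ) = Real.exp 0 from Real.exp_zero.symm]
    exact Real.exp_lt_exp.mpr (by nlinarith)
  · exact div_pos hθmem.1 (by positivity)
  · rw [div_lt_one (by positivity)]
    exact hθmem.2
  · have hlog : -2 * Real.log (Real.exp (-(R ^ 2) / 2)) = R ^ 2 := by
      rw [Real.log_exp]; ring
    have hang : 2 * π * (θ / (2 * π)) = θ := by field_simp
    simp only [bmF, hlog, hang, Real.sqrt_sq hR.le, hcosθ, hsinθ, hcos0, hsin0]
    rw [Prod.mk.injEq]
    constructor <;> field_simp

theorem density_mul {x : ℝ × ℝ} (hx : x ∈ bmS) :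
    ENNReal.ofReal |(bmB x).det| *
      (gaussianPDF 0 1 (bmF x).1 * gaussianPDF 0 1 (bmF x).2) = 1 := by
  have h0 : 0 < x.1 := hx.1.1
  have h1 : x.1 < 1 := hx.1.2
  have hpi := Real.pi_pos
  have hu : (0:ℝ) ≤ -2 * Real.log x.1 := by nlinarith [Real.log_neg h0 h1]
  have hdet : |(bmB x).det| = 2 * π * x.1⁻¹ := by
    have hxinv : 0 < x.1⁻¹ := inv_pos.mpr h0
    rw [det_bmB hx, abs_of_neg (by nlinarith : -(2 * π) * x.1⁻¹ < 0)]
    ring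
  set y₁ := (bmF x).1 with hy₁
  set y₂ := (bmF x).2 with hy₂
  have hsum : y₁ ^ 2 + y₂ ^ 2 = -2 * Real.log x.1 := by
    have hsq := Real.sq_sqrt hu
    have hpyth := Real.sin_sq_add_cos_sq (2 * π * x.2)
    simp only [hy₁, hy₂, bmF]
    nlinarith [hsq, hpyth]
  have hexp : Real.exp (-(y₁ - 0) ^ 2 / (2 * 1)) * Real.exp (-(y₂ - 0) ^ 2 / (2 * 1)) = x.1 := by
    rw [← Real.exp_add]
    have harg : -(y₁ - 0) ^ 2 / (2 * 1) + -(y₂ - 0) ^ 2 / (2 * 1) = Real.log x.1 := by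
      have : y₁ ^ 2 + y₂ ^ 2 = -2 * Real.log x.1 := hsum
      ring_nf
      ring_nf at this
      linarith
    rw [harg, Real.exp_log h0]
  have hpdf : gaussianPDFReal 0 1 y₁ * gaussianPDFReal 0 1 y₂ = (2 * π)⁻¹ * x.1 := by
    simp only [gaussianPDFReal, NNReal.coe_one, mul_one]
    have hsqrt : (Real.sqrt (2 * π))⁻¹ * (Real.sqrt (2 * π))⁻¹ = (2 * π)⁻¹ := by
      rw [← mul_inv, Real.mul_self_sqrt (by positivity)]
    calc (Real.sqrt (2 * π))⁻¹ * Real.exp (-(y₁ - 0) ^ 2 / 2) *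
          ((Real.sqrt (2 * π))⁻¹ * Real.exp (-(y₂ - 0) ^ 2 / 2))
        = ((Real.sqrt (2 * π))⁻¹ * (Real.sqrt (2 * π))⁻¹) *
          (Real.exp (-(y₁ - 0) ^ 2 / (2 * 1)) * Real.exp (-(y₂ - 0) ^ 2 / (2 * 1))) := by
          norm_num; ring
      _ = (2 * π)⁻¹ * x.1 := by rw [hsqrt, hexp]
  rw [hdet, gaussianPDF, gaussianPDF,
    ← ENNReal.ofReal_mul (gaussianPDFReal_nonneg 0 1 y₁),
    ← ENNReal.ofReal_mul (by positivity : (0:ℝ) ≤ 2 * π * x.1⁻¹), hpdf]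
  rw [show 2 * π * x.1⁻¹ * ((2 * π)⁻¹ * x.1) = 1 by field_simp]
  exact ENNReal.ofReal_one

end BoxMullerAux

open BoxMullerAux

theorem box_muller :
    Measure.map
      (fun p : ℝ × ℝ =>
        (Real.sqrt (-2 * Real.log p.1) * Real.cos (2 * π * p.2),
         Real.sqrt (-2 * Real.log p.1) * Real.sin (2 * π * p.2)))
      ((volume.restrict (Set.Ioo (0:ℝ) 1)).prod (volume.restrict (Set.Ioo (0:ℝ) 1)))
    = (gaussianReal 0 1).prod (gaussianReal 0 1) := by
  have hfm : Measurable bmF := measurable_bmF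
  have hs : MeasurableSet bmS := measurableSet_Ioo.prod measurableSet_Ioo
  have hN : volume {q : ℝ × ℝ | q.2 = 0} = 0 := by
    have he : {q : ℝ × ℝ | q.2 = 0} = (Set.univ : Set ℝ) ×ˢ ({0} : Set ℝ) := by
      ext ⟨a, b⟩; simp [eq_comm]
    rw [he, Measure.volume_eq_prod, Measure.prod_prod]
    simp
  have himg : bmF '' bmS =ᵐ[volume] (Set.univ : Set (ℝ × ℝ)) := by
    rw [MeasureTheory.ae_eq_univ]
    refine measure_mono_null (fun q hq => ?_) hN
    exact not_not.mp fun h => hq (mem_image_bmF h)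
  have hgauss : (gaussianReal 0 1).prod (gaussianReal 0 1)
      = volume.withDensity (fun q : ℝ × ℝ => gaussianPDF 0 1 q.1 * gaussianPDF 0 1 q.2) := by
    have hgA : ∀ A : Set ℝ, MeasurableSet A →
        gaussianReal 0 1 A = ∫⁻ y in A, gaussianPDF 0 1 y := fun A hA => by
      rw [gaussianReal_of_var_ne_zero 0 one_ne_zero, withDensity_apply _ hA]
    refine Measure.prod_eq fun A B hA hB => ?_
    rw [withDensity_apply _ (hA.prod hB), hgA A hA, hgA B hB, Measure.volume_eq_prod,
      ← Measure.prod_restrict,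
      lintegral_prod_mul (measurable_gaussianPDF 0 1).aemeasurable
        (measurable_gaussianPDF 0 1).aemeasurable]
  have hfun : (fun p : ℝ × ℝ =>
      (Real.sqrt (-2 * Real.log p.1) * Real.cos (2 * π * p.2),
       Real.sqrt (-2 * Real.log p.1) * Real.sin (2 * π * p.2))) = bmF := rfl
  rw [hfun, hgauss]
  refine Measure.ext fun A hA => ?_
  have hsA : MeasurableSet (bmS ∩ bmF ⁻¹' A) := hs.inter (hfm hA)
  have hLHS : (Measure.map bmF
      ((volume.restrict (Set.Ioo (0:ℝ) 1)).prod (volume.restrict (Set.Ioo (0:ℝ) 1)))) A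
      = volume (bmS ∩ bmF ⁻¹' A) := by
    rw [Measure.map_apply hfm hA, Measure.prod_restrict, ← Measure.volume_eq_prod,
      Measure.restrict_apply (hfm hA), Set.inter_comm]
    rfl
  rw [hLHS, withDensity_apply _ hA]
  have step1 : (∫⁻ q in A, gaussianPDF 0 1 q.1 * gaussianPDF 0 1 q.2)
      = ∫⁻ q in bmF '' (bmS ∩ bmF ⁻¹' A), gaussianPDF 0 1 q.1 * gaussianPDF 0 1 q.2 := by
    rw [Set.image_inter_preimage]
    refine setLIntegral_congr ?_
    have := MeasureTheory.ae_eq_set_inter himg (Filter.EventuallyEq.refl _ A)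
    simpa [Set.univ_inter] using this.symm
  rw [step1,
    lintegral_image_eq_lintegral_abs_det_fderiv_mul volume hsA
      (fun x hx => (hasFDerivAt_bmF hx.1).hasFDerivWithinAt)
      (injOn_bmF.mono Set.inter_subset_left) _]
  rw [setLIntegral_congr_fun hsA (fun x hx => density_mul hx.1),
    setLIntegral_one]
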